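/- Let t > 1 and let S be a greedy t-spanner in the Euclidean plane. Fix a segment AB with |AB| ≤ 1 and constants α, β with 1 ≤ α < β. The number of edges PQ of S that cross AB and have length between α·|AB| and β·|AB| is at most [ (2β(2β+1)/α²) · (8t²/(t−1)²) ]². -/

import Mathlib

open Classical
attribute [local instance] Classical.propDecidable

noncomputable section

/-- The two-dimensional Euclidean plane. -/
abbrev E2 := EuclideanSpace ℝ (Fin 2)


noncomputable section

/-- The length of a path given as a list of points: the sum of the metric
distances of consecutive points. -/
def chainLength {X : Type*} [PseudoMetricSpace X] : List X → ℝ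
  | [] => 0
  | [_] => 0
  | a :: b :: rest => dist a b + chainLength (b :: rest)

/-- `p` is a path from `u` to `v` using only (undirected) edges from `E`. -/
def IsPathIn {X : Type*} (E : Set (X × X)) (p : List X) (u v : X) : Prop :=
  p ≠ [] ∧ p.head? = some u ∧ p.getLast? = some v ∧
    p.Chain' (fun a b => (a, b) ∈ E ∨ (b, a) ∈ E)

/-- One step of the naive greedy spanner algorithm: add the pair `e` as an edge
unless a path of length at most `t · dist e.1 e.2` already exists. -/
def greedyStep {X : Type*} [PseudoMetricSpace X] (t : ℝ)
    (S : Finset (X × X)) (e : X × X) : Finset (X × X) :=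
  if ∃ p : List X, IsPathIn (↑S) p e.1 e.2 ∧ chainLength p ≤ t * dist e.1 e.2
  then S else insert e S

/-- The naive greedy spanner algorithm run over a list of pairs. -/
def naiveGreedy {X : Type*} [PseudoMetricSpace X] (t : ℝ) (l : List (X × X)) :
    Finset (X × X) :=
  l.foldl (greedyStep t) ∅


/-- Two segments cross when their open segments intersect. -/
def Crosses (u v a b : E2) : Prop :=
  ∃ z : E2, z ∈ openSegment ℝ u v ∧ z ∈ openSegment ℝ a b

section Paths
variable {X : Type*} [PseudoMetricSpace X]

lemma chainLength_nonneg : ∀ (p : List X), 0 ≤ chainLength p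
  | [] => le_refl 0
  | [_] => le_refl 0
  | _ :: b :: rest => add_nonneg dist_nonneg (chainLength_nonneg (b :: rest))

lemma chainLength_cons_cons (a b : X) (l : List X) :
    chainLength (a :: b :: l) = dist a b + chainLength (b :: l) := rfl

lemma chainLength_append_cons : ∀ (p : List X) (b : X) (q : List X) (hp : p ≠ []),
    chainLength (p ++ b :: q) = chainLength p + dist (p.getLast hp) b + chainLength (b :: q)
  | [], _, _, hp => absurd rfl hp
  | [a], b, q, _ => by simp [chainLength]
  | a :: c :: p', b, q, _ => by
      have ih := chainLength_append_cons (c :: p') b q (by simp)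
      simp only [List.cons_append, chainLength_cons_cons] at *
      rw [ih]
      have hl : (a :: c :: p').getLast (by simp) = (c :: p').getLast (by simp) :=
        List.getLast_cons (by simp)
      rw [hl]
      ring

lemma chainLength_reverse : ∀ (p : List X), chainLength p.reverse = chainLength p
  | [] => rfl
  | [_] => rfl
  | a :: b :: l => by
      have hrev : (a :: b :: l).reverse = (b :: l).reverse ++ a :: [] := by simp
      rw [hrev, chainLength_append_cons ((b :: l).reverse) a [] (by simp)]
      have hlast : ((b :: l).reverse).getLast (by simp) = b := by
        rw [List.getLast_reverse]
        simp
      rw [hlast, chainLength_reverse (b :: l)]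
      simp [chainLength, dist_comm, add_comm]

end Paths

section Conn
variable {X : Type*} [PseudoMetricSpace X]

def Conn (E : Set (X × X)) (u v : X) (L : ℝ) : Prop :=
  ∃ p : List X, IsPathIn E p u v ∧ chainLength p ≤ L

lemma Conn.mono {E E' : Set (X × X)} (h : E ⊆ E') {u v : X} {L : ℝ}
    (hc : Conn E u v L) : Conn E' u v L := by
  obtain ⟨p, ⟨hne, hh, hl, hch⟩, hlen⟩ := hc
  exact ⟨p, ⟨hne, hh, hl, hch.imp fun a b hab => hab.imp (fun h' => h h') (fun h' => h h')⟩, hlen⟩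

lemma Conn.weaken {E : Set (X × X)} {u v : X} {L L' : ℝ} (h : L ≤ L')
    (hc : Conn E u v L) : Conn E u v L' := by
  obtain ⟨p, hp, hlen⟩ := hc; exact ⟨p, hp, hlen.trans h⟩

lemma Conn.refl (E : Set (X × X)) (u : X) {L : ℝ} (hL : 0 ≤ L) : Conn E u u L :=
  ⟨[u], ⟨by simp, by simp, by simp, by simp [List.Chain']⟩, by simpa [chainLength] using hL⟩

lemma Conn.single {E : Set (X × X)} {u v : X} (h : (u, v) ∈ E) :
    Conn E u v (dist u v) :=
  ⟨[u, v], ⟨by simp, by simp, by simp, by simp [List.Chain', h]⟩, by simp [chainLength]⟩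

lemma Conn.symm {E : Set (X × X)} {u v : X} {L : ℝ} (hc : Conn E u v L) :
    Conn E v u L := by
  obtain ⟨p, ⟨hne, hh, hl, hch⟩, hlen⟩ := hc
  refine ⟨p.reverse, ⟨by simpa using hne, ?_, ?_, ?_⟩, by rwa [chainLength_reverse]⟩
  · rwa [List.head?_reverse]
  · rwa [List.getLast?_reverse]
  · unfold List.Chain'; rw [List.isChain_reverse]
    exact hch.imp fun a b hab => hab.symm

lemma Conn.trans {E : Set (X × X)} {u v w : X} {L₁ L₂ : ℝ}
    (h1 : Conn E u v L₁) (h2 : Conn E v w L₂) : Conn E u w (L₁ + L₂) := by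
  obtain ⟨p, ⟨hne, hh, hl, hch⟩, hlen⟩ := h1
  obtain ⟨q, ⟨qne, qh, ql, qch⟩, qlen⟩ := h2
  have hL1 : 0 ≤ L₁ := le_trans (chainLength_nonneg p) hlen
  have hL2 : 0 ≤ L₂ := le_trans (chainLength_nonneg q) qlen
  cases q with
  | nil => exact absurd rfl qne
  | cons a q' =>
    have hav : a = v := by simpa using qh
    subst hav
    cases q' with
    | nil =>
      have hvw : a = w := by simpa using ql
      subst hvw
      exact ⟨p, ⟨hne, hh, hl, hch⟩, hlen.trans (by linarith)⟩
    | cons b q'' =>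
      refine ⟨p ++ b :: q'', ⟨by simp [hne], ?_, ?_, ?_⟩, ?_⟩
      · rwa [List.head?_append_of_ne_nil _ hne]
      · rw [List.getLast?_append]
        have : (b :: q'').getLast? = some w := by
          have := ql
          rwa [show (a :: b :: q'') = [a] ++ b :: q'' from rfl, List.getLast?_append] at this
          
        simp [this]
      · unfold List.Chain'; rw [List.isChain_append]
        refine ⟨hch, (List.isChain_cons_cons.mp qch).2, ?_⟩
        intro x hx y hy
        rw [hl] at hx
        simp at hx hy
        subst hx; subst hy
        exact (List.isChain_cons_cons.mp qch).1
      · have hplast : p.getLast hne = a := by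
          have := List.getLast?_eq_getLast hne
          rw [this, Option.some_inj] at hl
          exact hl
        rw [chainLength_append_cons p b q'' hne, hplast]
        have : chainLength (a :: b :: q'') = dist a b + chainLength (b :: q'') := rfl
        linarith [this ▸ qlen]

end Conn

section Greedy
variable {X : Type*} [PseudoMetricSpace X] {t : ℝ}

lemma greedyStep_subset (t : ℝ) (S : Finset (X × X)) (e : X × X) :
    S ⊆ greedyStep t S e := by
  unfold greedyStep
  split
  · exact Finset.Subset.refl S
  · exact Finset.subset_insert e S

lemma foldl_greedy_subset (t : ℝ) : ∀ (l : List (X × X)) (S : Finset (X × X)),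
    S ⊆ l.foldl (greedyStep t) S
  | [], S => Finset.Subset.refl S
  | a :: l, S => (greedyStep_subset t S a).trans (foldl_greedy_subset t l (greedyStep t S a))

lemma mem_foldl_greedy (t : ℝ) : ∀ (l : List (X × X)) (S : Finset (X × X)) (x : X × X),
    x ∈ l.foldl (greedyStep t) S → x ∈ S ∨ x ∈ l
  | [], S, x, h => Or.inl h
  | a :: l, S, x, h => by
      rcases mem_foldl_greedy t l (greedyStep t S a) x h with h' | h'
      · unfold greedyStep at h'
        split at h'
        · exact Or.inl h'
        · rcases Finset.mem_insert.mp h' with h'' | h''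
          · exact Or.inr (by simp [h''])
          · exact Or.inl h''
      · exact Or.inr (List.mem_cons_of_mem a h')

/-- Every pair in the processed list is `t`-connected in the resulting spanner. -/
lemma foldl_greedy_conn (ht : 1 ≤ t) : ∀ (l : List (X × X)) (S : Finset (X × X)),
    ∀ x ∈ l, Conn (↑(l.foldl (greedyStep t) S) : Set (X × X)) x.1 x.2 (t * dist x.1 x.2)
  | [], _, x, hx => absurd hx List.not_mem_nil
  | a :: l, S, x, hx => by
      rcases List.mem_cons.mp hx with rfl | hx'
      · -- x = a
        rw [List.foldl_cons]
        have hsub : (↑(greedyStep t S x) : Set (X × X)) ⊆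
            ↑(l.foldl (greedyStep t) (greedyStep t S x)) := by
          exact_mod_cast foldl_greedy_subset t l (greedyStep t S x)
        by_cases hex : ∃ p : List X, IsPathIn (↑S) p x.1 x.2 ∧
            chainLength p ≤ t * dist x.1 x.2
        · obtain ⟨p, hp, hlen⟩ := hex
          have h0 : (↑S : Set (X × X)) ⊆ ↑(greedyStep t S x) := by
            exact_mod_cast greedyStep_subset t S x
          exact Conn.mono (h0.trans hsub) ⟨p, hp, hlen⟩
        · have hstep : greedyStep t S x = insert x S := by
            unfold greedyStep; exact if_neg hex
          have hedge : (x.1, x.2) ∈ (↑(greedyStep t S x) : Set (X × X)) := by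
            rw [hstep]; simp
          exact ((Conn.single hedge).mono hsub).weaken
            (by nlinarith [dist_nonneg (x := x.1) (y := x.2)])
      · exact foldl_greedy_conn ht l (greedyStep t S a) x hx'

/-- Extraction: every edge of the greedy spanner was inserted at some position,
at which moment no good path existed. -/
lemma foldl_greedy_extract (t : ℝ) : ∀ (l : List (X × X)) (S : Finset (X × X)) (x : X × X),
    x ∈ l.foldl (greedyStep t) S → x ∈ S ∨
      ∃ n : ℕ, ∃ h : n < l.length, l[n] = x ∧
        ¬∃ p : List X, IsPathIn (↑((l.take n).foldl (greedyStep t) S)) p x.1 x.2 ∧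
          chainLength p ≤ t * dist x.1 x.2
  | [], S, x, h => Or.inl h
  | a :: l, S, x, h => by
      rcases foldl_greedy_extract t l (greedyStep t S a) x h with h' | ⟨n, hn, hnx, hnp⟩
      · unfold greedyStep at h'
        split at h'
        · exact Or.inl h'
        · next hex =>
          rcases Finset.mem_insert.mp h' with rfl | h''
          · refine Or.inr ⟨0, by simp, rfl, ?_⟩
            simpa using hex
          · exact Or.inl h''
      · refine Or.inr ⟨n + 1, by simpa using Nat.succ_lt_succ hn, by simpa using hnx, ?_⟩
        simpa using hnp

end Greedy

section Gap
variable {X : Type*} [MetricSpace X] {t : ℝ}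

lemma greedy_gap (ht : 1 < t) (V : Finset X) (l : List (X × X))
    (hmem : ∀ e ∈ l, e.1 ∈ V ∧ e.2 ∈ V ∧ e.1 ≠ e.2)
    (hsort : List.Pairwise (fun a b => dist a.1 a.2 ≤ dist b.1 b.2) l)
    (hcomp : ∀ P ∈ V, ∀ Q ∈ V, P ≠ Q → (P, Q) ∈ l ∨ (Q, P) ∈ l)
    {e f : X × X} (he : e ∈ naiveGreedy t l) (hf : f ∈ naiveGreedy t l) (hef : e ≠ f) :
    (t - 1) / t * min (dist e.1 e.2) (dist f.1 f.2) ≤ dist e.1 f.1 + dist e.2 f.2 := by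
  have ht0 : 0 < t := lt_trans one_pos ht
  by_contra hcon
  push_neg at hcon
  -- extraction for both edges
  have hext := foldl_greedy_extract t l ∅ e he
  simp only [Finset.notMem_empty, false_or] at hext
  obtain ⟨ne', hne', hnee, hnpe⟩ := hext
  have hext := foldl_greedy_extract t l ∅ f hf
  simp only [Finset.notMem_empty, false_or] at hext
  obtain ⟨nf', hnf', hnff, hnpf⟩ := hext
  -- the main argument, with g the earlier edge and h the later one
  have main : ∀ (g h : X × X) (ng nh : ℕ) (hng : ng < l.length) (hnh : nh < l.length),
      l[ng] = g → l[nh] = h → ng < nh →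
      (¬∃ p : List X, IsPathIn (↑((l.take ng).foldl (greedyStep t) ∅)) p g.1 g.2 ∧
          chainLength p ≤ t * dist g.1 g.2) →
      (¬∃ p : List X, IsPathIn (↑((l.take nh).foldl (greedyStep t) ∅)) p h.1 h.2 ∧
          chainLength p ≤ t * dist h.1 h.2) →
      dist g.1 h.1 + dist g.2 h.2 < (t - 1) / t * min (dist g.1 g.2) (dist h.1 h.2) →
      False := by
    intro g h ng nh hng hnh hg hh hlt hnpg hnph hsum
    set S0 : Finset (X × X) := (l.take nh).foldl (greedyStep t) ∅ with hS0
    have hgl : g ∈ l := hg ▸ List.getElem_mem hng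
    have hhl : h ∈ l := hh ▸ List.getElem_mem hnh
    have hgV := hmem g hgl
    have hhV := hmem h hhl
    have hgpos : 0 < dist g.1 g.2 := dist_pos.mpr hgV.2.2
    have hhpos : 0 < dist h.1 h.2 := dist_pos.mpr hhV.2.2
    have hminpos : 0 < min (dist g.1 g.2) (dist h.1 h.2) := lt_min hgpos hhpos
    -- sortedness facts
    have hpw := List.pairwise_iff_getElem.mp hsort
    have hglen : dist g.1 g.2 ≤ dist h.1 h.2 := by
      have := hpw ng nh hng hnh hlt
      rwa [hg, hh] at this
    -- g belongs to S0
    have hgS0 : g ∈ S0 := by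
      have hng1 : ng + 1 ≤ nh := hlt
      have htake : l.take nh = l.take (ng + 1) ++ (l.drop (ng + 1)).take (nh - (ng + 1)) := by
        rw [← List.take_add]
        congr 1
        omega
      have hsucc : l.take (ng + 1) = l.take ng ++ [g] := by
        rw [List.take_succ]
        simp [List.getElem?_eq_getElem hng, hg]
      have hstep : (l.take (ng + 1)).foldl (greedyStep t) ∅ =
          greedyStep t ((l.take ng).foldl (greedyStep t) ∅) g := by
        rw [hsucc, List.foldl_append]
        rfl
      have hgmem : g ∈ (l.take (ng + 1)).foldl (greedyStep t) ∅ := by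
        rw [hstep]
        set S' := (l.take ng).foldl (greedyStep t) ∅ with hS'
        unfold greedyStep
        rw [if_neg hnpg]
        exact Finset.mem_insert_self g _
      rw [hS0, htake, List.foldl_append]
      exact foldl_greedy_subset t _ _ hgmem
    -- distances are small
    have hd11 : dist g.1 h.1 < dist h.1 h.2 := by
      have h1 : dist g.1 h.1 ≤ dist g.1 h.1 + dist g.2 h.2 := le_add_of_nonneg_right dist_nonneg
      have h2 : (t - 1) / t * min (dist g.1 g.2) (dist h.1 h.2) < min (dist g.1 g.2) (dist h.1 h.2) := by
        have : (t - 1) / t < 1 := by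
          rw [div_lt_one ht0]; linarith
        nlinarith
      calc dist g.1 h.1 ≤ _ := h1
        _ < _ := hsum
        _ < min (dist g.1 g.2) (dist h.1 h.2) := h2
        _ ≤ dist h.1 h.2 := min_le_right _ _
    have hd22 : dist g.2 h.2 < dist h.1 h.2 := by
      have h1 : dist g.2 h.2 ≤ dist g.1 h.1 + dist g.2 h.2 := le_add_of_nonneg_left dist_nonneg
      have h2 : (t - 1) / t * min (dist g.1 g.2) (dist h.1 h.2) < min (dist g.1 g.2) (dist h.1 h.2) := by
        have : (t - 1) / t < 1 := by
          rw [div_lt_one ht0]; linarith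
        nlinarith
      calc dist g.2 h.2 ≤ _ := h1
        _ < _ := hsum
        _ < min (dist g.1 g.2) (dist h.1 h.2) := h2
        _ ≤ dist h.1 h.2 := min_le_right _ _
    -- auxiliary: short pairs are connected in S0
    have hconn_aux : ∀ x y : X, x ∈ V → y ∈ V → dist x y < dist h.1 h.2 →
        Conn (↑S0 : Set (X × X)) x y (t * dist x y) := by
      intro x y hxV hyV hxy
      rcases eq_or_ne x y with rfl | hne
      · exact Conn.refl _ _ (by positivity)
      · have hw : (x, y) ∈ l ∨ (y, x) ∈ l := hcomp x hxV y hyV hne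
        -- in both cases produce membership in the prefix
        have hmem_take : ∀ w : X × X, w ∈ l → dist w.1 w.2 < dist h.1 h.2 → w ∈ l.take nh := by
          intro w hwl hwlt
          obtain ⟨m, hm, hmw⟩ := List.getElem_of_mem hwl
          have hmnh : m < nh := by
            by_contra hge
            push_neg at hge
            rcases eq_or_lt_of_le hge with rfl | hlt'
            · rw [hmw] at hh
              rw [hh] at hwlt
              exact lt_irrefl _ hwlt
            · have := hpw nh m hnh hm hlt'
              rw [hh, hmw] at this
              exact absurd hwlt (not_lt.mpr this)
          have : (l.take nh)[m]'(by simp [List.length_take]; omega) = w := by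
            rw [List.getElem_take]
            exact hmw
          exact this ▸ List.getElem_mem _
        rcases hw with hw | hw
        · have hin : (x, y) ∈ l.take nh := hmem_take (x, y) hw (by simpa using hxy)
          exact foldl_greedy_conn (le_of_lt ht) (l.take nh) ∅ (x, y) hin
        · have hin : (y, x) ∈ l.take nh := hmem_take (y, x) hw (by simpa [dist_comm] using hxy)
          have := foldl_greedy_conn (le_of_lt ht) (l.take nh) ∅ (y, x) hin
          simpa [dist_comm] using this.symm
    have hc1 : Conn (↑S0 : Set (X × X)) h.1 g.1 (t * dist g.1 h.1) := by
      have := hconn_aux g.1 h.1 hgV.1 hhV.1 hd11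
      exact this.symm
    have hc2 : Conn (↑S0 : Set (X × X)) g.2 h.2 (t * dist g.2 h.2) :=
      hconn_aux g.2 h.2 hgV.2.1 hhV.2.1 hd22
    have hcg : Conn (↑S0 : Set (X × X)) g.1 g.2 (dist g.1 g.2) :=
      Conn.single (Finset.mem_coe.mpr hgS0)
    have hpath : Conn (↑S0 : Set (X × X)) h.1 h.2
        (t * dist g.1 h.1 + dist g.1 g.2 + t * dist g.2 h.2) :=
      (hc1.trans hcg).trans hc2
    have hfin : t * dist g.1 h.1 + dist g.1 g.2 + t * dist g.2 h.2 ≤ t * dist h.1 h.2 := by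
      have hmin_le : min (dist g.1 g.2) (dist h.1 h.2) ≤ dist h.1 h.2 := min_le_right _ _
      have h1 : t * (dist g.1 h.1 + dist g.2 h.2) <
          t * ((t - 1) / t * min (dist g.1 g.2) (dist h.1 h.2)) :=
        mul_lt_mul_of_pos_left hsum ht0
      have h2 : t * ((t - 1) / t * min (dist g.1 g.2) (dist h.1 h.2)) =
          (t - 1) * min (dist g.1 g.2) (dist h.1 h.2) := by
        field_simp
      have h3 : (t - 1) * min (dist g.1 g.2) (dist h.1 h.2) ≤ (t - 1) * dist h.1 h.2 :=
        mul_le_mul_of_nonneg_left hmin_le (by linarith)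
      nlinarith
    exact hnph ((hpath.weaken hfin) : Conn _ _ _ _)
  -- apply main in the two possible orders
  rcases lt_trichotomy ne' nf' with hlt | heq | hlt
  · exact main e f ne' nf' hne' hnf' hnee hnff hlt hnpe hnpf hcon
  · subst heq
    exact hef (hnee.symm.trans hnff)
  · refine main f e nf' ne' hnf' hne' hnff hnee hlt hnpf hnpe ?_
    calc dist f.1 e.1 + dist f.2 e.2 = dist e.1 f.1 + dist e.2 f.2 := by
          rw [dist_comm, dist_comm f.2]
      _ < (t - 1) / t * min (dist e.1 e.2) (dist f.1 f.2) := hcon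
      _ = (t - 1) / t * min (dist f.1 f.2) (dist e.1 e.2) := by rw [min_comm]

end Gap

section Packing
open MeasureTheory Pointwise

abbrev P2 := E2 × E2

instance P2.isAddHaar : Measure.IsAddHaarMeasure (volume : Measure P2) := by
  rw [Measure.volume_eq_prod]
  exact Measure.prod.instIsAddHaarMeasure _ _

/-- "Sum-metric" ball in the product plane. -/
def sball (c : P2) (r : ℝ) : Set P2 := {p : P2 | dist p.1 c.1 + dist p.2 c.2 < r}

lemma isOpen_sball (c : P2) (r : ℝ) : IsOpen (sball c r) :=
  isOpen_lt ((continuous_fst.dist continuous_const).add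
    (continuous_snd.dist continuous_const)) continuous_const

lemma sball_eq (c : P2) (r : ℝ) (hr : 0 < r) :
    sball c r = c +ᵥ r • sball 0 1 := by
  ext p
  simp only [sball, Set.mem_setOf_eq, Set.mem_vadd_set, Set.mem_smul_set]
  constructor
  · intro hp
    refine ⟨r • (r⁻¹ • (p - c)), ⟨r⁻¹ • (p - c), ?_, rfl⟩, ?_⟩
    · simp only [Set.mem_setOf_eq, Prod.smul_fst, Prod.smul_snd, Prod.fst_sub, Prod.snd_sub,
        Prod.fst_zero, Prod.snd_zero]
      rw [dist_zero_right, dist_zero_right, norm_smul, norm_smul]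
      rw [Real.norm_eq_abs, abs_inv, abs_of_pos hr]
      rw [← dist_eq_norm, ← dist_eq_norm]
      rw [← mul_add]
      rw [inv_mul_lt_iff₀ hr, mul_one]
      exact hp
    · rw [smul_inv_smul₀ (ne_of_gt hr), vadd_eq_add, add_sub_cancel]
  · rintro ⟨q, ⟨u, hu, rfl⟩, rfl⟩
    simp only [Set.mem_setOf_eq, Prod.fst_zero, Prod.snd_zero, dist_zero_right,
      dist_zero_right] at hu
    rw [vadd_eq_add]
    have h1 : dist (c + r • u).1 c.1 = r * ‖u.1‖ := by
      simp [Prod.fst_add, Prod.smul_fst, dist_eq_norm, norm_smul, Real.norm_eq_abs,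
        abs_of_pos hr]
    have h2 : dist (c + r • u).2 c.2 = r * ‖u.2‖ := by
      simp [Prod.snd_add, Prod.smul_snd, dist_eq_norm, norm_smul, Real.norm_eq_abs,
        abs_of_pos hr]
    rw [h1, h2, ← mul_add]
    calc r * (‖u.1‖ + ‖u.2‖) < r * 1 := by
          exact mul_lt_mul_of_pos_left hu hr
      _ = r := mul_one r

lemma volume_sball (c : P2) (r : ℝ) (hr : 0 < r) :
    volume (sball c r) = ENNReal.ofReal (r ^ 4) * volume (sball 0 1) := by
  rw [sball_eq c r hr, measure_vadd, Measure.addHaar_smul]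
  congr 2
  · norm_num [Module.finrank_prod, finrank_euclideanSpace_fin, abs_of_pos hr]

lemma volume_sball_unit_pos : 0 < volume (sball (0 : P2) 1) :=
  (isOpen_sball 0 1).measure_pos volume ⟨0, by simp [sball]⟩

lemma volume_sball_unit_lt_top : volume (sball (0 : P2) 1) < ⊤ := by
  refine lt_of_le_of_lt (measure_mono ?_) (measure_ball_lt_top (x := (0 : P2)) (r := 1))
  intro p hp
  simp only [sball, Set.mem_setOf_eq] at hp
  rw [Metric.mem_ball]
  have := Prod.dist_eq (x := p) (y := (0 : P2))
  rw [this]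
  have h1 : dist p.1 (0 : P2).1 ≥ 0 := dist_nonneg
  have h2 : dist p.2 (0 : P2).2 ≥ 0 := dist_nonneg
  exact max_lt (by linarith) (by linarith)

lemma packing_count (s : Finset P2) (δ R : ℝ) (hδ : 0 < δ) (c : P2)
    (hsep : ∀ i ∈ s, ∀ j ∈ s, i ≠ j → 2 * δ ≤ dist i.1 j.1 + dist i.2 j.2)
    (hloc : ∀ i ∈ s, dist i.1 c.1 + dist i.2 c.2 ≤ R) :
    (s.card : ℝ) * δ ^ 4 ≤ (R + δ) ^ 4 := by
  rcases Finset.eq_empty_or_nonempty s with rfl | ⟨i0, hi0⟩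
  · simp only [Finset.card_empty, Nat.cast_zero, zero_mul]
    positivity
  have hR : 0 ≤ R := le_trans (by positivity) (hloc i0 hi0)
  have hdisj : (↑s : Set P2).PairwiseDisjoint (fun i => sball i δ) := by
    intro i hi j hj hij
    rw [Function.onFun, Set.disjoint_left]
    intro p hpi hpj
    simp only [sball, Set.mem_setOf_eq] at hpi hpj
    have h1 : dist i.1 j.1 ≤ dist p.1 i.1 + dist p.1 j.1 := dist_triangle_left _ _ _
    have h2 : dist i.2 j.2 ≤ dist p.2 i.2 + dist p.2 j.2 := dist_triangle_left _ _ _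
    have := hsep i (Finset.mem_coe.mp hi) j (Finset.mem_coe.mp hj) hij
    linarith
  have hsubset : (⋃ i ∈ s, sball i δ) ⊆ sball c (R + δ) := by
    intro p hp
    simp only [Set.mem_iUnion] at hp
    obtain ⟨i, hi, hpi⟩ := hp
    simp only [sball, Set.mem_setOf_eq] at hpi ⊢
    have h1 : dist p.1 c.1 ≤ dist p.1 i.1 + dist i.1 c.1 := dist_triangle _ _ _
    have h2 : dist p.2 c.2 ≤ dist p.2 i.2 + dist i.2 c.2 := dist_triangle _ _ _
    have := hloc i hi
    linarith
  have hmeas : volume (⋃ i ∈ s, sball i δ) = s.card * (ENNReal.ofReal (δ ^ 4) * volume (sball 0 1)) := by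
    rw [measure_biUnion_finset hdisj (fun i _ => (isOpen_sball i δ).measurableSet)]
    rw [Finset.sum_congr rfl (fun i _ => volume_sball i δ hδ)]
    rw [Finset.sum_const, nsmul_eq_mul]
  have hle : (s.card : ENNReal) * (ENNReal.ofReal (δ ^ 4) * volume (sball 0 1)) ≤
      ENNReal.ofReal ((R + δ) ^ 4) * volume (sball 0 1) := by
    rw [← hmeas, ← volume_sball c (R + δ) (by linarith)]
    exact measure_mono hsubset
  rw [← mul_assoc] at hle
  have hcancel := (ENNReal.mul_le_mul_iff_left (ne_of_gt volume_sball_unit_pos)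
    (ne_of_lt volume_sball_unit_lt_top)).mp hle
  have : ENNReal.ofReal ((s.card : ℝ) * δ ^ 4) ≤ ENNReal.ofReal ((R + δ) ^ 4) := by
    rw [ENNReal.ofReal_mul (by positivity)]
    rw [ENNReal.ofReal_natCast]
    exact hcancel
  exact (ENNReal.ofReal_le_ofReal_iff (by positivity)).mp this

end Packing

section Mid

lemma dist_midpoint_le {z A B : E2} (hz : z ∈ segment ℝ A B) :
    dist z (midpoint ℝ A B) ≤ dist A B / 2 := by
  obtain ⟨a, b, ha, hb, hab, rfl⟩ := hz
  have hb' : b = 1 - a := by linarith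
  subst hb'
  have ha1 : a ≤ 1 := by linarith
  have hkey : a • A + (1 - a) • B - midpoint ℝ A B = ((2 * a - 1) / 2) • (A - B) := by
    rw [midpoint_eq_smul_add, invOf_eq_inv]
    module
  rw [dist_eq_norm, hkey, norm_smul, Real.norm_eq_abs, dist_eq_norm]
  have habs : |(2 * a - 1) / 2| ≤ 1 / 2 := by
    rw [abs_div, abs_of_pos (by norm_num : (0:ℝ) < 2)]
    apply div_le_div_of_nonneg_right ?_ ?_ |>.trans_eq rfl
    · rw [abs_le]; constructor <;> linarith
    · norm_num
  have := norm_nonneg (A - B)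
  nlinarith

end Mid

set_option maxHeartbeats 1000000

/-- **Counting crossing edges in a length band.** Let `t > 1`, `S` the greedy
`t`-spanner in the Euclidean plane, `AB` a segment of length at most `1`, and
`1 ≤ α < β`. The number of edges `PQ` of `S` that cross `AB` and have length
between `α·|AB|` and `β·|AB|` is at most
`[(2β(2β+1)/α²) · (8t²/(t−1)²)]²`. -/
theorem crossing_band_count {t : ℝ} (ht : 1 < t)
    (V : Finset E2) (l : List (E2 × E2))
    (hmem : ∀ e ∈ l, e.1 ∈ V ∧ e.2 ∈ V ∧ e.1 ≠ e.2)
    (hsort : List.Pairwise (fun a b => dist a.1 a.2 ≤ dist b.1 b.2) l)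
    (hcomp : ∀ P ∈ V, ∀ Q ∈ V, P ≠ Q → (P, Q) ∈ l ∨ (Q, P) ∈ l)
    (A B : E2) (hAB : dist A B ≤ 1)
    (α β : ℝ) (hα : 1 ≤ α) (hαβ : α < β) :
    (((naiveGreedy t l).filter fun e => Crosses e.1 e.2 A B ∧
        α * dist A B ≤ dist e.1 e.2 ∧ dist e.1 e.2 ≤ β * dist A B).card : ℝ) ≤
      ((2 * β * (2 * β + 1) / α ^ 2) * (8 * t ^ 2 / (t - 1) ^ 2)) ^ 2 := by
  have ht0 : 0 < t := lt_trans one_pos ht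
  have ht1 : 0 < t - 1 := by linarith
  have hα0 : 0 < α := lt_of_lt_of_le one_pos hα
  have hβ1 : 1 < β := lt_of_le_of_lt hα hαβ
  have hβ0 : 0 < β := lt_trans one_pos hβ1
  set G' := (naiveGreedy t l).filter fun e => Crosses e.1 e.2 A B ∧
      α * dist A B ≤ dist e.1 e.2 ∧ dist e.1 e.2 ≤ β * dist A B with hG'
  rcases eq_or_lt_of_le (dist_nonneg (x := A) (y := B)) with hdz | hdpos
  · -- degenerate case : dist A B = 0
    have hempty : G' = ∅ := by
      rw [hG', Finset.filter_eq_empty_iff]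
      intro e he
      rintro ⟨_, _, hle⟩
      have hel : e ∈ l := by
        rcases mem_foldl_greedy t l ∅ e he with h | h
        · exact absurd h (Finset.notMem_empty e)
        · exact h
      have hne := (hmem e hel).2.2
      have hpos : 0 < dist e.1 e.2 := dist_pos.mpr hne
      rw [← hdz, mul_zero] at hle
      linarith
    rw [hempty]
    simp only [Finset.card_empty, Nat.cast_zero]
    positivity
  · -- main case : dist A B > 0
    set d := dist A B with hd
    set c' : ℝ := (t - 1) / (2 * t) with hc'
    have hc'0 : 0 < c' := by positivity
    have hc'half : c' < 1 / 2 := by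
      rw [hc', div_lt_div_iff₀ (by positivity) (by norm_num)]
      linarith
    set δ : ℝ := c' * α * d with hδdef
    have hδ0 : 0 < δ := by positivity
    -- separation
    have hsep : ∀ e ∈ G', ∀ f ∈ G', e ≠ f → 2 * δ ≤ dist e.1 f.1 + dist e.2 f.2 := by
      intro e he f hf hef
      rw [hG', Finset.mem_filter] at he hf
      obtain ⟨heG, _, heα, _⟩ := he
      obtain ⟨hfG, _, hfα, _⟩ := hf
      have hgap := greedy_gap ht V l hmem hsort hcomp heG hfG hef
      have hmin : α * d ≤ min (dist e.1 e.2) (dist f.1 f.2) := le_min heα hfα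
      have h2δ : 2 * δ = (t - 1) / t * (α * d) := by
        rw [hδdef, hc']
        field_simp
      rw [h2δ]
      calc (t - 1) / t * (α * d) ≤ (t - 1) / t * min (dist e.1 e.2) (dist f.1 f.2) := by
            apply mul_le_mul_of_nonneg_left hmin
            positivity
        _ ≤ _ := hgap
    -- location
    set m : E2 := midpoint ℝ A B with hm
    have hloc : ∀ e ∈ G', dist e.1 m + dist e.2 m ≤ (β + 1) * d := by
      intro e he
      rw [hG', Finset.mem_filter] at he
      obtain ⟨heG, ⟨z, hz1, hz2⟩, _, heβ⟩ := he
      have hzseg1 : z ∈ segment ℝ e.1 e.2 := openSegment_subset_segment ℝ _ _ hz1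
      have hzseg2 : z ∈ segment ℝ A B := openSegment_subset_segment ℝ _ _ hz2
      have hzm : dist z m ≤ d / 2 := dist_midpoint_le hzseg2
      have hsplit : dist e.1 z + dist z e.2 = dist e.1 e.2 :=
        dist_add_dist_of_mem_segment hzseg1
      have h1 : dist e.1 m ≤ dist e.1 z + dist z m := dist_triangle _ _ _
      have h2 : dist e.2 m ≤ dist e.2 z + dist z m := dist_triangle _ _ _
      have h3 : dist e.2 z = dist z e.2 := dist_comm _ _
      linarith
    -- packing
    have hpack := packing_count G' δ ((β + 1) * d) hδ0 (m, m) hsep hloc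
    -- arithmetic conclusion
    set C : ℝ := ((2 * β * (2 * β + 1) / α ^ 2) * (8 * t ^ 2 / (t - 1) ^ 2)) ^ 2 with hC
    have hCδ : C * δ ^ 4 = 16 * β ^ 2 * (2 * β + 1) ^ 2 * d ^ 4 := by
      rw [hC, hδdef, hc']
      field_simp
      ring
    have hK2 : (β + 1 + c' * α) ^ 2 ≤ 4 * β * (2 * β + 1) := by
      have hcα : c' * α < β / 2 := by
        calc c' * α < (1 / 2) * α := by
              exact mul_lt_mul_of_pos_right hc'half hα0
          _ < (1 / 2) * β := by nlinarith
          _ = β / 2 := by ring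
      have hq1 : (β + 1 + c' * α) ^ 2 ≤ (β + 1 + β / 2) ^ 2 := by
        apply pow_le_pow_left₀ (by positivity) (by linarith)
      nlinarith [hq1]
    have hK4 : ((β + 1) * d + δ) ^ 4 ≤ 16 * β ^ 2 * (2 * β + 1) ^ 2 * d ^ 4 := by
      have hKd : (β + 1) * d + δ = (β + 1 + c' * α) * d := by
        rw [hδdef]; ring
      rw [hKd]
      have hK0 : 0 ≤ β + 1 + c' * α := by positivity
      have h2 : ((β + 1 + c' * α) * d) ^ 4 = ((β + 1 + c' * α) ^ 2) ^ 2 * (d ^ 2) ^ 2 := by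
        ring
      rw [h2]
      have h3 : ((β + 1 + c' * α) ^ 2) ^ 2 ≤ (4 * β * (2 * β + 1)) ^ 2 :=
        pow_le_pow_left₀ (sq_nonneg _) hK2 2
      calc ((β + 1 + c' * α) ^ 2) ^ 2 * (d ^ 2) ^ 2 ≤ (4 * β * (2 * β + 1)) ^ 2 * (d ^ 2) ^ 2 := by
            apply mul_le_mul_of_nonneg_right h3
            positivity
        _ = 16 * β ^ 2 * (2 * β + 1) ^ 2 * d ^ 4 := by ring
    have hfinal : (G'.card : ℝ) * δ ^ 4 ≤ C * δ ^ 4 := by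
      calc (G'.card : ℝ) * δ ^ 4 ≤ ((β + 1) * d + δ) ^ 4 := hpack
        _ ≤ 16 * β ^ 2 * (2 * β + 1) ^ 2 * d ^ 4 := hK4
        _ = C * δ ^ 4 := hCδ.symm
    exact le_of_mul_le_mul_right hfinal (by positivity)


end
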